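/- arXiv:1908.07581 — 2 statements merged into one kernel-verified Lean document; each statement's English description precedes it below -/
import Mathlib

section
/- In the simultaneous-move reconstruction game for a k-out-of-n secret sharing scheme (1 < k < n) with greedy utilities, the strategy 'do not reveal your share' weakly dominates 'reveal your share' for every player. Formally: model each player i's strategy as a Boolean b_i (true = reveal). A player learns the secret iff either she reveals and at least k players reveal in total, or she does not reveal and at least k-1 other players reveal (her own share plus k-1 revealed shares suffice). Utility of player i is: 0 if no one learns the secret; 1 + (n - m) if player i learns the secret where m is the number of players who learn it; and -1 if player i does not learn the secret but someone else does. Then for every profile of the other players' strategies, player i's utility from not revealing is at least her utility from revealing, and there exists a profile of others' strategies (exactly k-1 others reveal) where not revealing gives strictly higher utility. -/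
/-- The set of players who reveal their share. -/
def revealers (n : ℕ) (s : Fin n → Bool) : Finset (Fin n) :=
  Finset.univ.filter fun j => s j = true

/-- Player `i` learns the secret: she reveals and at least `k` players reveal in total,
or she abstains and at least `k-1` *other* players reveal. -/
def learns (n k : ℕ) (s : Fin n → Bool) (i : Fin n) : Prop :=
  (s i = true ∧ k ≤ (revealers n s).card) ∨
  (s i = false ∧ k - 1 ≤ ((revealers n s).erase i).card)

instance (n k : ℕ) (s : Fin n → Bool) : DecidablePred (learns n k s) := fun i => by
  unfold learns; infer_instance

/-- Number of players who learn the secret. -/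
def numLearners (n k : ℕ) (s : Fin n → Bool) : ℕ :=
  (Finset.univ.filter fun j => learns n k s j).card

/-- Greedy utility: `0` if nobody learns; `1 + (n - m)` for a learner when `m` learn; `-1`
for a non-learner when someone learns. -/
def util (n k : ℕ) (s : Fin n → Bool) (i : Fin n) : ℤ :=
  if numLearners n k s = 0 then 0
  else if learns n k s i then 1 + ((n : ℤ) - (numLearners n k s : ℤ))
  else -1

lemma rev_update_true (n : ℕ) (s : Fin n → Bool) (i : Fin n) :
    revealers n (Function.update s i true) = insert i ((revealers n s).erase i) := by
  ext j
  by_cases hj : j = i <;> simp [revealers, Function.update_apply, hj]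

lemma rev_update_false (n : ℕ) (s : Fin n → Bool) (i : Fin n) :
    revealers n (Function.update s i false) = (revealers n s).erase i := by
  ext j
  by_cases hj : j = i <;> simp [revealers, Function.update_apply, hj]

/-- Abstaining weakly dominates revealing for every player in the `k`-out-of-`n`
simultaneous reconstruction game with greedy utilities (`1 < k < n`), with a strict
improvement when exactly `k-1` of the other players reveal. -/
theorem stmt0 (n k : ℕ) (hk : 1 < k) (hkn : k < n) (i : Fin n) :
    (∀ s : Fin n → Bool,
      util n k (Function.update s i true) i ≤ util n k (Function.update s i false) i) ∧
    (∃ s : Fin n → Bool, ((revealers n s).erase i).card = k - 1 ∧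
      util n k (Function.update s i true) i < util n k (Function.update s i false) i) := by
  constructor
  · intro s
    set st := Function.update s i true with hst
    set sf := Function.update s i false with hsf
    have hrt : revealers n st = insert i ((revealers n s).erase i) := rev_update_true n s i
    have hrf : revealers n sf = (revealers n s).erase i := rev_update_false n s i
    set E := (revealers n s).erase i with hE
    have hiE : i ∉ E := Finset.notMem_erase i _
    have hct : (revealers n st).card = E.card + 1 := by
      rw [hrt]; exact Finset.card_insert_of_notMem hiE
    by_cases hA : k - 1 ≤ E.card
    · have hlf : learns n k sf i := by
        right
        refine ⟨Function.update_self .., ?_⟩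
        rw [hrf, Finset.erase_eq_of_notMem hiE]
        exact hA
      have hlt : learns n k st i := by
        left
        refine ⟨Function.update_self .., ?_⟩
        rw [hct]; omega
      have hsub : revealers n sf ⊆ revealers n st := by
        rw [hrt, hrf]; exact Finset.subset_insert _ _
      have hmono : ∀ j, learns n k sf j → learns n k st j := by
        intro j hj
        by_cases hji : j = i
        · subst hji; exact hlt
        · have hs : st j = sf j := by
            simp [hst, hsf, Function.update_of_ne hji]
          rcases hj with ⟨h1, h2⟩ | ⟨h1, h2⟩
          · exact Or.inl ⟨hs.trans h1, h2.trans (Finset.card_le_card hsub)⟩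
          · exact Or.inr ⟨hs.trans h1,
              h2.trans (Finset.card_le_card (Finset.erase_subset_erase _ hsub))⟩
      have hmf0 : numLearners n k sf ≠ 0 :=
        Finset.card_ne_zero_of_mem (Finset.mem_filter.mpr ⟨Finset.mem_univ i, hlf⟩)
      have hmt0 : numLearners n k st ≠ 0 :=
        Finset.card_ne_zero_of_mem (Finset.mem_filter.mpr ⟨Finset.mem_univ i, hlt⟩)
      have hle : numLearners n k sf ≤ numLearners n k st := by
        apply Finset.card_le_card
        intro j hj
        rw [Finset.mem_filter] at hj ⊢
        exact ⟨hj.1, hmono j hj.2⟩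
      unfold util
      rw [if_neg hmt0, if_neg hmf0, if_pos hlt, if_pos hlf]
      have : (numLearners n k sf : ℤ) ≤ numLearners n k st := by exact_mod_cast hle
      linarith
    · have hmf0 : numLearners n k sf = 0 := by
        unfold numLearners
        rw [Finset.card_eq_zero, Finset.filter_eq_empty_iff]
        intro j _
        rintro (⟨h1, h2⟩ | ⟨h1, h2⟩)
        · rw [hrf] at h2; omega
        · have hle : ((revealers n sf).erase j).card ≤ E.card := by
            rw [hrf]; exact Finset.card_le_card (Finset.erase_subset _ _)
          omega
      have hnlt : ¬ learns n k st i := by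
        rintro (⟨h1, h2⟩ | ⟨h1, h2⟩)
        · rw [hct] at h2; omega
        · simp [hst] at h1
      unfold util
      rw [if_pos hmf0]
      by_cases h1 : numLearners n k st = 0
      · rw [if_pos h1]
      · rw [if_neg h1, if_neg hnlt]; norm_num
  · obtain ⟨T, hTsub, hTcard⟩ : ∃ T ⊆ Finset.univ.erase i, T.card = k - 1 := by
      apply Finset.exists_subset_card_eq
      have : (Finset.univ.erase i).card = n - 1 := by
        rw [Finset.card_erase_of_mem (Finset.mem_univ i)]
        simp
      omega
    have hiT : i ∉ T := fun h => (Finset.mem_erase.mp (hTsub h)).1 rfl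
    set s : Fin n → Bool := fun j => decide (j ∈ T) with hsdef
    have hrev : revealers n s = T := by
      ext j; simp [revealers, hsdef]
    have hErev : (revealers n s).erase i = T := by
      rw [hrev, Finset.erase_eq_of_notMem hiT]
    refine ⟨s, by rw [hErev, hTcard], ?_⟩
    set st := Function.update s i true with hst
    set sf := Function.update s i false with hsf
    have hrt : revealers n st = insert i T := by
      rw [rev_update_true, hErev]
    have hrf : revealers n sf = T := by
      rw [rev_update_false, hErev]
    have hct : (revealers n st).card = k := by
      rw [hrt, Finset.card_insert_of_notMem hiT, hTcard]; omega
    -- everyone learns under st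
    have hallt : ∀ j, learns n k st j := by
      intro j
      by_cases hj : st j = true
      · exact Or.inl ⟨hj, by rw [hct]⟩
      · have hj' : st j = false := by simpa using hj
        have hji : j ≠ i := by
          intro h; subst h; simp [hst, Function.update_self] at hj'
        have hjT : j ∉ insert i T := by
          intro hmem
          rcases Finset.mem_insert.mp hmem with h | h
          · exact hji h
          · have : st j = true := by
              rw [hst, Function.update_of_ne hji]; simpa [hsdef] using h
            rw [hj'] at this; exact Bool.false_ne_true this
        refine Or.inr ⟨hj', ?_⟩
        rw [hrt, Finset.erase_eq_of_notMem hjT]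
        have : (insert i T).card = k := by
          rw [Finset.card_insert_of_notMem hiT, hTcard]; omega
        omega
    have hmt : numLearners n k st = n := by
      unfold numLearners
      rw [Finset.filter_true_of_mem (fun j _ => hallt j)]
      simp
    have hlf : learns n k sf i := by
      right
      refine ⟨Function.update_self .., ?_⟩
      rw [hrf, Finset.erase_eq_of_notMem hiT, hTcard]
    obtain ⟨j, hjT⟩ := Finset.card_pos.mp (show 0 < T.card by omega)
    have hji : j ≠ i := fun h => hiT (h ▸ hjT)
    have hnj : ¬ learns n k sf j := by
      rintro (⟨h1, h2⟩ | ⟨h1, h2⟩)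
      · rw [hrf, hTcard] at h2; omega
      · rw [hsf, Function.update_of_ne hji] at h1
        simp [hsdef, hjT] at h1
    have hmf1 : numLearners n k sf ≠ 0 :=
      Finset.card_ne_zero_of_mem (Finset.mem_filter.mpr ⟨Finset.mem_univ i, hlf⟩)
    have hmfn : numLearners n k sf < n := by
      unfold numLearners
      have hne : (Finset.univ.filter fun j' => learns n k sf j') ≠ Finset.univ := by
        intro h
        have : j ∈ Finset.univ.filter fun j' => learns n k sf j' := by
          rw [h]; exact Finset.mem_univ j
        exact hnj (Finset.mem_filter.mp this).2
      have := Finset.card_lt_card (Finset.ssubset_univ_iff.mpr hne)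
      simpa using this
    have hmt0 : numLearners n k st ≠ 0 := by rw [hmt]; omega
    unfold util
    rw [if_neg hmt0, if_neg hmf1, if_pos (hallt i), if_pos hlf, hmt]
    have h1 : (numLearners n k sf : ℤ) < n := by exact_mod_cast hmfn
    linarith
end

section
/- For the 2-out-of-3 common-good reconstruction game with equal values N = N_1 = N_2 = N_3 and cost c with 0 < c < N/2: if all three players choose the same mixed strategy α ∈ (0,1) satisfying 2α(1−α)N = c, then this symmetric profile is a Nash equilibrium in which every player is inessential (each player's expected utility is independent of her own strategy). -/
/-- Product-Bernoulli weight of a coalition `S`: each player `j` participates independently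
with probability `α j`. -/
def coalWt (n : ℕ) (α : Fin n → ℝ) (S : Finset (Fin n)) : ℝ :=
  ∏ j, if j ∈ S then α j else 1 - α j

/-- Probability that the random coalition of participants is authorized. -/
def probAuth (n : ℕ) (Γ : Finset (Fin n) → Prop) [DecidablePred Γ]
    (α : Fin n → ℝ) : ℝ :=
  ∑ S : Finset (Fin n), if Γ S then coalWt n α S else 0

/-- Expected utility of player `i` in the common-good reconstruction game (V1–V2):
value `N i` if the coalition of participants is authorized, minus participation cost `c`. -/
def Eutil (n : ℕ) (Γ : Finset (Fin n) → Prop) [DecidablePred Γ]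
    (N : Fin n → ℝ) (c : ℝ) (α : Fin n → ℝ) (i : Fin n) : ℝ :=
  N i * probAuth n Γ α - c * α i

/-- Pivotality probability of player `i`: the coalition `S` of *other* participants is
unauthorized but `S ∪ {i}` is authorized. -/
def pivot (n : ℕ) (Γ : Finset (Fin n) → Prop) [DecidablePred Γ]
    (α : Fin n → ℝ) (i : Fin n) : ℝ :=
  ∑ S ∈ (Finset.univ.erase i).powerset,
    if ¬ Γ S ∧ Γ (insert i S) then
      ∏ j ∈ Finset.univ.erase i, (if j ∈ S then α j else 1 - α j)
    else 0

/-- Probability that the coalition of *other* participants is already authorized. -/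
def authWithout (n : ℕ) (Γ : Finset (Fin n) → Prop) [DecidablePred Γ]
    (α : Fin n → ℝ) (i : Fin n) : ℝ :=
  ∑ S ∈ (Finset.univ.erase i).powerset,
    if Γ S then ∏ j ∈ Finset.univ.erase i, (if j ∈ S then α j else 1 - α j) else 0

/-- Set of participants of a pure strategy profile. -/
def parts (n : ℕ) (s : Fin n → Bool) : Finset (Fin n) :=
  Finset.univ.filter fun i => s i = true

/-- Pure-strategy utility in the common-good game. -/
def uPure (n : ℕ) (Γ : Finset (Fin n) → Prop) [DecidablePred Γ]
    (N : Fin n → ℝ) (c : ℝ) (s : Fin n → Bool) (i : Fin n) : ℝ :=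
  (if Γ (parts n s) then N i else 0) - (if s i then c else 0)

lemma probAuth3 (β : Fin 3 → ℝ) :
    probAuth 3 (fun S => 2 ≤ S.card) β =
      β 0 * β 1 + β 0 * β 2 + β 1 * β 2 - 2 * (β 0 * β 1 * β 2) := by
  unfold probAuth coalWt
  rw [show (Finset.univ : Finset (Finset (Fin 3))) =
      {∅, {0}, {1}, {2}, {0,1}, {0,2}, {1,2}, {0,1,2}} from by decide]
  repeat rw [Finset.sum_insert (by decide)]
  rw [Finset.sum_singleton]
  simp (config := { decide := true }) only [Fin.prod_univ_three]
  norm_num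
  ring

lemma pivot3 (α : ℝ) :
    ∀ i : Fin 3, pivot 3 (fun S : Finset (Fin 3) => 2 ≤ S.card) (fun _ => α) i
      = 2 * α * (1 - α) := by
  intro i
  fin_cases i
  · show pivot 3 (fun S : Finset (Fin 3) => 2 ≤ S.card) (fun _ => α) 0 = 2 * α * (1 - α)
    unfold pivot
    rw [show ((Finset.univ.erase (0 : Fin 3)).powerset : Finset (Finset (Fin 3))) =
        {∅, {1}, {2}, {1,2}} from by decide]
    repeat rw [Finset.sum_insert (by decide)]
    rw [Finset.sum_singleton]
    rw [show (Finset.univ.erase (0 : Fin 3)) = {1, 2} from by decide]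
    repeat rw [Finset.prod_insert (by decide)]
    simp (config := { decide := true }) only [Finset.prod_singleton]
    norm_num; ring
  · show pivot 3 (fun S : Finset (Fin 3) => 2 ≤ S.card) (fun _ => α) 1 = 2 * α * (1 - α)
    unfold pivot
    rw [show ((Finset.univ.erase (1 : Fin 3)).powerset : Finset (Finset (Fin 3))) =
        {∅, {0}, {2}, {0,2}} from by decide]
    repeat rw [Finset.sum_insert (by decide)]
    rw [Finset.sum_singleton]
    rw [show (Finset.univ.erase (1 : Fin 3)) = {0, 2} from by decide]
    repeat rw [Finset.prod_insert (by decide)]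
    simp (config := { decide := true }) only [Finset.prod_singleton]
    norm_num; ring
  · show pivot 3 (fun S : Finset (Fin 3) => 2 ≤ S.card) (fun _ => α) 2 = 2 * α * (1 - α)
    unfold pivot
    rw [show ((Finset.univ.erase (2 : Fin 3)).powerset : Finset (Finset (Fin 3))) =
        {∅, {0}, {1}, {0,1}} from by decide]
    repeat rw [Finset.sum_insert (by decide)]
    rw [Finset.sum_singleton]
    rw [show (Finset.univ.erase (2 : Fin 3)) = {0, 1} from by decide]
    repeat rw [Finset.prod_insert (by decide)]
    simp (config := { decide := true }) only [Finset.prod_singleton]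
    norm_num; ring

/-- For the 2-out-of-3 common-good game with equal values `N` and cost `c` with
`0 < c < N/2`: if all three players play the same mixed strategy `α ∈ (0,1)` with
`2α(1-α)N = c`, the symmetric profile is a Nash equilibrium in which every player is
inessential (her expected utility does not depend on her own strategy). -/
theorem stmt6 (N c : ℝ) (hc : 0 < c) (hcN : c < N / 2)
    (α : ℝ) (hα : α ∈ Set.Ioo (0 : ℝ) 1) (heq : 2 * α * (1 - α) * N = c) :
    let Γ : Finset (Fin 3) → Prop := fun S => 2 ≤ S.card
    let prof : Fin 3 → ℝ := fun _ => α
    let Nv : Fin 3 → ℝ := fun _ => N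
    (∀ i : Fin 3, pivot 3 Γ prof i = 2 * α * (1 - α)) ∧
    (∀ i : Fin 3, ∀ x y : ℝ,
      Eutil 3 Γ Nv c (Function.update prof i x) i =
        Eutil 3 Γ Nv c (Function.update prof i y) i) ∧
    (∀ i : Fin 3, ∀ x ∈ Set.Icc (0 : ℝ) 1,
      Eutil 3 Γ Nv c (Function.update prof i x) i ≤ Eutil 3 Γ Nv c prof i) := by

  intro Γ prof Nv
  have key : ∀ i : Fin 3, ∀ x y : ℝ,
      Eutil 3 Γ Nv c (Function.update prof i x) i =
        Eutil 3 Γ Nv c (Function.update prof i y) i := by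
    show ∀ i : Fin 3, ∀ x y : ℝ,
      Eutil 3 (fun S : Finset (Fin 3) => 2 ≤ S.card) (fun _ => N) c
          (Function.update (fun _ => α) i x) i =
        Eutil 3 (fun S : Finset (Fin 3) => 2 ≤ S.card) (fun _ => N) c
          (Function.update (fun _ => α) i y) i
    intro i x y
    unfold Eutil
    rw [probAuth3, probAuth3]
    fin_cases i <;>
      simp (config := { decide := true }) only [Function.update] <;>
      norm_num <;>
      linear_combination (x - y) * heq
  refine ⟨fun i => pivot3 α i, key, ?_⟩
  intro i x _
  have h := key i x α
  have hp : Function.update prof i α = prof := Function.update_eq_self i prof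
  rw [hp] at h
  exact le_of_eq h
end
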